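/- Let θ ∈ (0, π/2) and let u be a model eigenfunction of H(θ) with eigenvalue σ. Then ∫_{ℝ²₊} V_θ ∂_s³u · u ds dt = (3/2) sin θ · ∫_{ℝ²₊} ∂_s²u · u ds dt. -/

import Mathlib

open Real MeasureTheory Set
open Filter Topology

noncomputable section

/-- Partial derivative with respect to the first variable. -/
def pd1 (u : ℝ → ℝ → ℝ) : ℝ → ℝ → ℝ := fun s t => deriv (fun x => u x t) s

/-- Partial derivative with respect to the second variable. -/
def pd2 (u : ℝ → ℝ → ℝ) : ℝ → ℝ → ℝ := fun s t => deriv (fun y => u s y) t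

/-- The potential `V_θ(s,t) = t cos θ − s sin θ`. -/
def Vpot (θ : ℝ) : ℝ → ℝ → ℝ := fun s t => t * Real.cos θ - s * Real.sin θ

/-- The operator `H(θ) = −∂_s² − ∂_t² + V_θ²` applied to `u`. -/
def Hop (θ : ℝ) (u : ℝ → ℝ → ℝ) : ℝ → ℝ → ℝ :=
  fun s t => - pd1 (pd1 u) s t - pd2 (pd2 u) s t + (Vpot θ s t)^2 * u s t

/-- Integral over the half-plane `{t > 0}` with respect to `ds dt`. -/
def intHalf (f : ℝ → ℝ → ℝ) : ℝ := ∫ s : ℝ, ∫ t in Set.Ioi (0:ℝ), f s t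

/-- Schwartz-class on the closed half-plane: all iterated partial derivatives decay
faster than any power of `|s| + t`. -/
def SchwartzHalf (u : ℝ → ℝ → ℝ) : Prop :=
  ∀ k l n : ℕ, ∃ C : ℝ, ∀ s t : ℝ, 0 ≤ t →
    |pd1^[k] (pd2^[l] u) s t| ≤ C * (1 + |s| + t) ^ (-(n:ℝ))

/-- A model eigenfunction of `H(θ)` with eigenvalue `σ`: smooth up to the boundary,
Schwartz-class, `L²`-normalized, Neumann boundary condition, and `H(θ)u = σu` on `{t ≥ 0}`. -/
structure IsModelEigen (θ : ℝ) (u : ℝ → ℝ → ℝ) (σ : ℝ) : Prop where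
  smooth : ∀ n : ℕ, ContDiff ℝ n (fun p : ℝ × ℝ => u p.1 p.2)
  schwartz : SchwartzHalf u
  normalized : intHalf (fun s t => (u s t)^2) = 1
  neumann : ∀ s : ℝ, pd2 u s 0 = 0
  eigen : ∀ s t : ℝ, 0 ≤ t → Hop θ u s t = σ * u s t

def Sm (u : ℝ → ℝ → ℝ) : Prop := ∀ n : ℕ, ContDiff ℝ n (fun p : ℝ × ℝ => u p.1 p.2)

lemma Sm.hasDeriv1 {u : ℝ → ℝ → ℝ} (hu : Sm u) (s t : ℝ) :
    HasDerivAt (fun x => u x t) (pd1 u s t) s := by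
  have hU : HasFDerivAt (fun p : ℝ × ℝ => u p.1 p.2)
      (fderiv ℝ (fun p : ℝ × ℝ => u p.1 p.2) (s, t)) (s, t) :=
    (((hu 1).differentiable (by norm_num)) (s, t)).hasFDerivAt
  have h2 : HasDerivAt (fun x : ℝ => ((x, t) : ℝ × ℝ)) ((1 : ℝ), (0 : ℝ)) s :=
    (hasDerivAt_id s).prodMk (hasDerivAt_const s t)
  have h3 : HasDerivAt (fun x => u x t)
      ((fderiv ℝ (fun p : ℝ × ℝ => u p.1 p.2) (s, t)) (1, 0)) s := by have := hU.comp_hasDerivAt s h2; exact this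
  exact h3.differentiableAt.hasDerivAt

lemma pd1_eq_fderiv {u : ℝ → ℝ → ℝ} (hu : Sm u) (s t : ℝ) :
    pd1 u s t = (fderiv ℝ (fun p : ℝ × ℝ => u p.1 p.2) (s, t)) (1, 0) := by
  have hU : HasFDerivAt (fun p : ℝ × ℝ => u p.1 p.2)
      (fderiv ℝ (fun p : ℝ × ℝ => u p.1 p.2) (s, t)) (s, t) :=
    (((hu 1).differentiable (by norm_num)) (s, t)).hasFDerivAt
  have h2 : HasDerivAt (fun x : ℝ => ((x, t) : ℝ × ℝ)) ((1 : ℝ), (0 : ℝ)) s :=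
    (hasDerivAt_id s).prodMk (hasDerivAt_const s t)
  have h3 : HasDerivAt (fun x => u x t)
      ((fderiv ℝ (fun p : ℝ × ℝ => u p.1 p.2) (s, t)) (1, 0)) s := by have := hU.comp_hasDerivAt s h2; exact this
  simpa [pd1] using h3.deriv

lemma sm_pd1 {u : ℝ → ℝ → ℝ} (hu : Sm u) : Sm (pd1 u) := by
  intro n
  have heq : (fun p : ℝ × ℝ => pd1 u p.1 p.2)
      = fun p : ℝ × ℝ => (fderiv ℝ (fun q : ℝ × ℝ => u q.1 q.2) p) (1, 0) := by
    funext p; exact pd1_eq_fderiv hu p.1 p.2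
  rw [heq]
  exact ((hu (n+1)).fderiv_right (m := n) (by exact_mod_cast le_rfl)).clm_apply contDiff_const

lemma Sm.pd1_iter {u : ℝ → ℝ → ℝ} (hu : Sm u) (k : ℕ) : Sm (pd1^[k] u) := by
  induction k with
  | zero => simpa using hu
  | succ k ih => rw [Function.iterate_succ_apply']; exact sm_pd1 ih
section
variable {u : ℝ → ℝ → ℝ}

lemma schwartz_pd1_bound (hs : SchwartzHalf u) (k n : ℕ) :
    ∃ C : ℝ, 0 ≤ C ∧ ∀ s t : ℝ, 0 ≤ t → |pd1^[k] u s t| ≤ C / (1 + |s| + t) ^ n := by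
  obtain ⟨C, hC⟩ := hs k 0 n
  simp only [Function.iterate_zero_apply] at hC
  refine ⟨max C 0, le_max_right _ _, fun s t ht => ?_⟩
  have hx : (0:ℝ) < 1 + |s| + t := by positivity
  have h := hC s t ht
  rw [Real.rpow_neg hx.le, Real.rpow_natCast] at h
  calc |pd1^[k] u s t| ≤ C * ((1 + |s| + t) ^ n)⁻¹ := h
    _ ≤ max C 0 * ((1 + |s| + t) ^ n)⁻¹ := by gcongr; exact le_max_left _ _
    _ = max C 0 / (1 + |s| + t) ^ n := by rw [div_eq_mul_inv]

end

lemma integrable_of_le_inv_one_add_sq {f : ℝ → ℝ} (hc : Continuous f) {C : ℝ}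
    (h : ∀ x, |f x| ≤ C / (1 + x ^ 2)) : Integrable f := by
  have hg : Integrable (fun x : ℝ => C * (1 + x ^ 2)⁻¹) := integrable_inv_one_add_sq.const_mul C
  exact hg.mono' hc.aestronglyMeasurable (ae_of_all _ fun x => by
    simpa [Real.norm_eq_abs, div_eq_mul_inv] using h x)

lemma one_add_sq_le_one_add_abs_sq (x : ℝ) : 1 + x ^ 2 ≤ (1 + |x|) ^ 2 := by
  nlinarith [abs_nonneg x, sq_abs x]

lemma integrable_half_of_decay {f : ℝ → ℝ → ℝ}
    (hc : Continuous (fun p : ℝ × ℝ => f p.1 p.2)) {C : ℝ} (hC : 0 ≤ C)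
    (hb : ∀ s t : ℝ, 0 ≤ t → |f s t| ≤ C / (1 + |s| + t) ^ 4) :
    Integrable (Function.uncurry f) (volume.prod (volume.restrict (Set.Ioi 0))) := by
  have hg : Integrable (fun p : ℝ × ℝ => (C * (1 + p.1 ^ 2)⁻¹) * (1 + p.2 ^ 2)⁻¹)
      (volume.prod (volume.restrict (Set.Ioi 0))) :=
    (integrable_inv_one_add_sq.const_mul C).mul_prod integrable_inv_one_add_sq.restrict
  have hae : ∀ᵐ p : ℝ × ℝ ∂(volume.prod (volume.restrict (Set.Ioi 0))), 0 < p.2 := by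
    rw [MeasureTheory.ae_iff]
    have hset : {p : ℝ × ℝ | ¬ 0 < p.2} = Set.univ ×ˢ Set.Iic 0 := by
      ext p; simp [not_lt]
    rw [hset, MeasureTheory.Measure.prod_prod]
    rw [MeasureTheory.Measure.restrict_apply measurableSet_Iic]
    simp [Set.Iic_inter_Ioi, Set.Ioc_self]
  refine hg.mono' hc.aestronglyMeasurable ?_
  filter_upwards [hae] with p hp
  have ht : (0:ℝ) ≤ p.2 := hp.le
  have hx : (0:ℝ) < 1 + |p.1| + p.2 := by positivity
  have key : (1 + p.1 ^ 2) * (1 + p.2 ^ 2) ≤ (1 + |p.1| + p.2) ^ 4 := by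
    nlinarith [abs_nonneg p.1, sq_abs p.1, sq_nonneg p.1, sq_nonneg p.2,
      mul_nonneg (abs_nonneg p.1) ht, sq_nonneg (|p.1| + p.2), sq_nonneg (|p.1| * p.2)]
  calc ‖f p.1 p.2‖ = |f p.1 p.2| := rfl
    _ ≤ C / (1 + |p.1| + p.2) ^ 4 := hb p.1 p.2 ht
    _ ≤ C / ((1 + p.1 ^ 2) * (1 + p.2 ^ 2)) := by
        have hpos : (0:ℝ) < (1 + p.1 ^ 2) * (1 + p.2 ^ 2) := by positivity
        exact div_le_div_of_nonneg_left hC hpos key |>.trans le_rfl |>.trans le_rfl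
    _ = C * (1 + p.1 ^ 2)⁻¹ * (1 + p.2 ^ 2)⁻¹ := by
        rw [div_eq_mul_inv, mul_inv, mul_assoc]
lemma abs_vpot_le (θ s t : ℝ) (ht : 0 ≤ t) : |Vpot θ s t| ≤ 1 + |s| + t := by
  have h1 : |Vpot θ s t| ≤ |t * Real.cos θ| + |s * Real.sin θ| := abs_sub _ _
  have h2 : |t * Real.cos θ| ≤ t := by
    rw [abs_mul, abs_of_nonneg ht]
    nlinarith [Real.abs_cos_le_one θ, ht]
  have h3 : |s * Real.sin θ| ≤ |s| := by
    rw [abs_mul]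
    nlinarith [Real.abs_sin_le_one θ, abs_nonneg s]
  linarith

lemma slice_identity (θ : ℝ) {u : ℝ → ℝ → ℝ} (hsm : Sm u)
    (hs : ∀ k n : ℕ, ∃ C : ℝ, 0 ≤ C ∧ ∀ s t : ℝ, 0 ≤ t →
      |pd1^[k] u s t| ≤ C / (1 + |s| + t) ^ n)
    (t : ℝ) (ht : 0 ≤ t) :
    ∫ s : ℝ, Vpot θ s t * pd1 (pd1 (pd1 u)) s t * u s t
      = 3 / 2 * Real.sin θ * ∫ s : ℝ, pd1 (pd1 u) s t * u s t := by
  -- smoothness of iterates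
  have hsm1 : Sm (pd1 u) := sm_pd1 hsm
  have hsm2 : Sm (pd1 (pd1 u)) := sm_pd1 hsm1
  -- derivative facts
  have hd0 : ∀ x : ℝ, HasDerivAt (fun y => u y t) (pd1 u x t) x := fun x => hsm.hasDeriv1 x t
  have hd1 : ∀ x : ℝ, HasDerivAt (fun y => pd1 u y t) (pd1 (pd1 u) x t) x :=
    fun x => hsm1.hasDeriv1 x t
  have hd2 : ∀ x : ℝ, HasDerivAt (fun y => pd1 (pd1 u) y t) (pd1 (pd1 (pd1 u)) x t) x :=
    fun x => hsm2.hasDeriv1 x t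
  have hdV : ∀ x : ℝ, HasDerivAt (fun y => Vpot θ y t) (-Real.sin θ) x := by
    intro x
    have : HasDerivAt (fun y : ℝ => t * Real.cos θ - y * Real.sin θ)
        (0 - 1 * Real.sin θ) x :=
      (hasDerivAt_const x _).sub ((hasDerivAt_id x).mul_const _)
    simpa [Vpot] using this
  -- the primitive G
  set G : ℝ → ℝ := fun x => Vpot θ x t * (pd1 (pd1 u) x t * u x t)
      - 1/2 * (Vpot θ x t * (pd1 u x t) ^ 2) - Real.sin θ / 2 * (u x t * pd1 u x t) with hGdef
  have hG : ∀ x : ℝ, HasDerivAt G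
      (Vpot θ x t * pd1 (pd1 (pd1 u)) x t * u x t
        - 3 / 2 * Real.sin θ * (pd1 (pd1 u) x t * u x t)) x := by
    intro x
    have h1 : HasDerivAt (fun y => Vpot θ y t * (pd1 (pd1 u) y t * u y t))
        ((-Real.sin θ) * (pd1 (pd1 u) x t * u x t)
          + Vpot θ x t * (pd1 (pd1 (pd1 u)) x t * u x t + pd1 (pd1 u) x t * pd1 u x t)) x :=
      (hdV x).mul ((hd2 x).mul (hd0 x))
    have hp : HasDerivAt (fun y => (pd1 u y t) ^ 2)
        ((2:ℕ) * (pd1 u x t) ^ 1 * pd1 (pd1 u) x t) x := (hd1 x).pow 2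
    have h2 : HasDerivAt (fun y => Vpot θ y t * (pd1 u y t) ^ 2)
        ((-Real.sin θ) * (pd1 u x t) ^ 2
          + Vpot θ x t * ((2:ℕ) * (pd1 u x t) ^ 1 * pd1 (pd1 u) x t)) x := (hdV x).mul hp
    have h3 : HasDerivAt (fun y => u y t * pd1 u y t)
        (pd1 u x t * pd1 u x t + u x t * pd1 (pd1 u) x t) x := (hd0 x).mul (hd1 x)
    have h4 := (h1.sub (h2.const_mul (1/2 : ℝ))).sub (h3.const_mul (Real.sin θ / 2))
    refine h4.congr_deriv ?_
    push_cast
    ring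
  -- bounds
  obtain ⟨C0, hC0, hb0⟩ := hs 0 0
  obtain ⟨C1, hC1, hb1⟩ := hs 1 1
  obtain ⟨C2, hC2, hb2⟩ := hs 2 2
  obtain ⟨C3, hC3, hb3⟩ := hs 3 3
  have hb0' : ∀ s : ℝ, |u s t| ≤ C0 := by
    intro s; simpa using hb0 s t ht
  have hxpos : ∀ s : ℝ, (0:ℝ) < 1 + |s| + t := fun s => by positivity
  have hsm3 : Sm (pd1 (pd1 (pd1 u))) := sm_pd1 hsm2
  have contSlice : ∀ {w : ℝ → ℝ → ℝ}, Sm w → Continuous (fun s : ℝ => w s t) := by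
    intro w hw
    exact (hw 0).continuous.comp (continuous_id.prodMk continuous_const)
  have hcV : Continuous fun s : ℝ => Vpot θ s t := by unfold Vpot; fun_prop
  have hquad : ∀ s : ℝ, 1 + s ^ 2 ≤ (1 + |s| + t) ^ 2 := by
    intro s
    refine (one_add_sq_le_one_add_abs_sq s).trans ?_
    nlinarith [abs_nonneg s]
  -- integrability of the two integrands
  have hA : ∀ s : ℝ, |Vpot θ s t * pd1 (pd1 (pd1 u)) s t * u s t| ≤ C3 * C0 / (1 + s ^ 2) := by
    intro s
    have hx := hxpos s
    rw [abs_mul, abs_mul]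
    calc |Vpot θ s t| * |pd1 (pd1 (pd1 u)) s t| * |u s t|
        ≤ (1 + |s| + t) * (C3 / (1 + |s| + t) ^ 3) * C0 := by
          gcongr
          · exact abs_vpot_le θ s t ht
          · exact hb3 s t ht
          · exact hb0' s
      _ = C3 * C0 / (1 + |s| + t) ^ 2 := by first | (field_simp; ring) | field_simp
      _ ≤ C3 * C0 / (1 + s ^ 2) :=
          div_le_div_of_nonneg_left (mul_nonneg hC3 hC0) (by positivity) (hquad s)
  have hB : ∀ s : ℝ, |pd1 (pd1 u) s t * u s t| ≤ C2 * C0 / (1 + s ^ 2) := by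
    intro s
    have hx := hxpos s
    rw [abs_mul]
    calc |pd1 (pd1 u) s t| * |u s t|
        ≤ C2 / (1 + |s| + t) ^ 2 * C0 := by
          gcongr
          · exact hb2 s t ht
          · exact hb0' s
      _ = C2 * C0 / (1 + |s| + t) ^ 2 := by ring
      _ ≤ C2 * C0 / (1 + s ^ 2) :=
          div_le_div_of_nonneg_left (mul_nonneg hC2 hC0) (by positivity) (hquad s)
  have hIA : Integrable (fun s : ℝ => Vpot θ s t * pd1 (pd1 (pd1 u)) s t * u s t) :=
    integrable_of_le_inv_one_add_sq
      (((hcV.mul (contSlice hsm3)).mul (contSlice hsm))) hA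
  have hIB : Integrable (fun s : ℝ => pd1 (pd1 u) s t * u s t) :=
    integrable_of_le_inv_one_add_sq ((contSlice hsm2).mul (contSlice hsm)) hB
  have hIh : Integrable (fun s : ℝ => Vpot θ s t * pd1 (pd1 (pd1 u)) s t * u s t
      - 3 / 2 * Real.sin θ * (pd1 (pd1 u) s t * u s t)) :=
    hIA.sub (hIB.const_mul _)
  -- decay of G
  set K : ℝ := C2 * C0 + C1 * C1 / 2 + C0 * C1 / 2 with hKdef
  have hGb : ∀ x : ℝ, |G x| ≤ K / (1 + |x|) := by
    intro x
    have hx := hxpos x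
    have hx1 : (0:ℝ) < 1 + |x| := by positivity
    have hxle : 1 + |x| ≤ 1 + |x| + t := by linarith
    have h1 := hb1 x t ht
    rw [pow_one] at h1
    have e1 : |Vpot θ x t * (pd1 (pd1 u) x t * u x t)| ≤ C2 * C0 / (1 + |x|) := by
      rw [abs_mul, abs_mul]
      calc |Vpot θ x t| * (|pd1 (pd1 u) x t| * |u x t|)
          ≤ (1 + |x| + t) * (C2 / (1 + |x| + t) ^ 2 * C0) := by
            gcongr
            · exact abs_vpot_le θ x t ht
            · exact hb2 x t ht
            · exact hb0' x
        _ = C2 * C0 / (1 + |x| + t) := by first | (field_simp; ring) | field_simp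
        _ ≤ C2 * C0 / (1 + |x|) :=
            div_le_div_of_nonneg_left (mul_nonneg hC2 hC0) hx1 hxle
    have e2 : |1/2 * (Vpot θ x t * (pd1 u x t) ^ 2)| ≤ (C1 * C1 / 2) / (1 + |x|) := by
      rw [abs_mul, abs_mul, abs_pow]
      have : |(1:ℝ)/2| = 1/2 := by norm_num
      rw [this]
      calc 1/2 * (|Vpot θ x t| * |pd1 u x t| ^ 2)
          ≤ 1/2 * ((1 + |x| + t) * (C1 / (1 + |x| + t)) ^ 2) := by
            gcongr
            · exact abs_vpot_le θ x t ht
            · exact h1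
        _ = (C1 * C1 / 2) / (1 + |x| + t) := by first | (field_simp; ring) | field_simp
        _ ≤ (C1 * C1 / 2) / (1 + |x|) := by
            refine div_le_div_of_nonneg_left ?_ hx1 hxle
            positivity
    have e3 : |Real.sin θ / 2 * (u x t * pd1 u x t)| ≤ (C0 * C1 / 2) / (1 + |x|) := by
      rw [abs_mul, abs_mul]
      have hsin : |Real.sin θ / 2| ≤ 1/2 := by
        rw [abs_div]
        have := Real.abs_sin_le_one θ
        rw [show |(2:ℝ)| = 2 by norm_num]
        linarith
      calc |Real.sin θ / 2| * (|u x t| * |pd1 u x t|)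
          ≤ 1/2 * (C0 * (C1 / (1 + |x| + t))) := by
            gcongr
            · exact hb0' x
            · exact h1
        _ = (C0 * C1 / 2) / (1 + |x| + t) := by first | (field_simp; ring) | field_simp
        _ ≤ (C0 * C1 / 2) / (1 + |x|) := by
            refine div_le_div_of_nonneg_left ?_ hx1 hxle
            positivity
    calc |G x| ≤ |Vpot θ x t * (pd1 (pd1 u) x t * u x t)
          - 1/2 * (Vpot θ x t * (pd1 u x t) ^ 2)| + |Real.sin θ / 2 * (u x t * pd1 u x t)| :=
        abs_sub _ _
      _ ≤ |Vpot θ x t * (pd1 (pd1 u) x t * u x t)| + |1/2 * (Vpot θ x t * (pd1 u x t) ^ 2)|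
          + |Real.sin θ / 2 * (u x t * pd1 u x t)| := by
        have := abs_sub (Vpot θ x t * (pd1 (pd1 u) x t * u x t))
          (1/2 * (Vpot θ x t * (pd1 u x t) ^ 2))
        linarith
      _ ≤ C2 * C0 / (1 + |x|) + (C1 * C1 / 2) / (1 + |x|) + (C0 * C1 / 2) / (1 + |x|) := by
        linarith
      _ = K / (1 + |x|) := by rw [hKdef]; ring
  have hlim : Tendsto (fun x : ℝ => K / (1 + |x|)) atTop (𝓝 0) :=
    Tendsto.div_atTop tendsto_const_nhds
      (tendsto_atTop_add_const_left _ 1 tendsto_abs_atTop_atTop)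
  have hlim' : Tendsto (fun x : ℝ => K / (1 + |x|)) atBot (𝓝 0) :=
    Tendsto.div_atTop tendsto_const_nhds
      (tendsto_atTop_add_const_left _ 1 tendsto_abs_atBot_atTop)
  have htop : Tendsto G atTop (𝓝 0) :=
    squeeze_zero_norm (fun x => by simpa [Real.norm_eq_abs] using hGb x) hlim
  have hbot : Tendsto G atBot (𝓝 0) :=
    squeeze_zero_norm (fun x => by simpa [Real.norm_eq_abs] using hGb x) hlim'
  -- FTC on the two half-lines
  have hFTC1 : (∫ x in Ioi (0:ℝ), (Vpot θ x t * pd1 (pd1 (pd1 u)) x t * u x t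
        - 3 / 2 * Real.sin θ * (pd1 (pd1 u) x t * u x t))) = 0 - G 0 :=
    integral_Ioi_of_hasDerivAt_of_tendsto' (fun x _ => hG x) hIh.integrableOn htop
  have hFTC2 : (∫ x in Iic (0:ℝ), (Vpot θ x t * pd1 (pd1 (pd1 u)) x t * u x t
        - 3 / 2 * Real.sin θ * (pd1 (pd1 u) x t * u x t))) = G 0 - 0 :=
    integral_Iic_of_hasDerivAt_of_tendsto' (fun x _ => hG x) hIh.integrableOn hbot
  have hsplit := integral_add_compl (s := Set.Iic (0:ℝ)) measurableSet_Iic hIh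
  rw [compl_Iic] at hsplit
  have hzero : (∫ s : ℝ, (Vpot θ s t * pd1 (pd1 (pd1 u)) s t * u s t
      - 3 / 2 * Real.sin θ * (pd1 (pd1 u) s t * u s t))) = 0 := by
    rw [← hsplit, hFTC1, hFTC2]; ring
  rw [integral_sub hIA (hIB.const_mul _), MeasureTheory.integral_const_mul] at hzero
  linarith


/-- Lemma 2.5: `∫ V_θ ∂_s³u · u = (3/2) sin θ ∫ ∂_s²u · u`. -/
theorem ds4_identity (θ : ℝ) (hθ : θ ∈ Set.Ioo 0 (π/2))
    (u : ℝ → ℝ → ℝ) (σ : ℝ) (hu : IsModelEigen θ u σ) :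
    intHalf (fun s t => Vpot θ s t * pd1 (pd1 (pd1 u)) s t * u s t) =
      3 / 2 * Real.sin θ * intHalf (fun s t => pd1 (pd1 u) s t * u s t) := by
  have hsm : Sm u := hu.smooth
  have hsb : ∀ k n : ℕ, ∃ C : ℝ, 0 ≤ C ∧ ∀ s t : ℝ, 0 ≤ t →
      |pd1^[k] u s t| ≤ C / (1 + |s| + t) ^ n := schwartz_pd1_bound hu.schwartz
  obtain ⟨C0, hC0, hb0⟩ := hsb 0 0
  obtain ⟨C2, hC2, hb2⟩ := hsb 2 4
  obtain ⟨C3, hC3, hb3⟩ := hsb 3 5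
  have hb0' : ∀ s t : ℝ, 0 ≤ t → |u s t| ≤ C0 := by
    intro s t ht; simpa using hb0 s t ht
  have hcV : Continuous (fun p : ℝ × ℝ => Vpot θ p.1 p.2) := by unfold Vpot; fun_prop
  have hcu : Continuous (fun p : ℝ × ℝ => u p.1 p.2) := (hsm 0).continuous
  have hc2 : Continuous (fun p : ℝ × ℝ => pd1 (pd1 u) p.1 p.2) :=
    ((sm_pd1 (sm_pd1 hsm)) 0).continuous
  have hc3 : Continuous (fun p : ℝ × ℝ => pd1 (pd1 (pd1 u)) p.1 p.2) :=
    ((sm_pd1 (sm_pd1 (sm_pd1 hsm))) 0).continuous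
  -- decay bounds of order 4 for both integrands
  have hbA : ∀ s t : ℝ, 0 ≤ t →
      |Vpot θ s t * pd1 (pd1 (pd1 u)) s t * u s t| ≤ C3 * C0 / (1 + |s| + t) ^ 4 := by
    intro s t ht
    have hx : (0:ℝ) < 1 + |s| + t := by positivity
    rw [abs_mul, abs_mul]
    calc |Vpot θ s t| * |pd1 (pd1 (pd1 u)) s t| * |u s t|
        ≤ (1 + |s| + t) * (C3 / (1 + |s| + t) ^ 5) * C0 := by
          gcongr
          · exact abs_vpot_le θ s t ht
          · exact hb3 s t ht
          · exact hb0' s t ht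
      _ = C3 * C0 / (1 + |s| + t) ^ 4 := by field_simp
  have hbB : ∀ s t : ℝ, 0 ≤ t →
      |pd1 (pd1 u) s t * u s t| ≤ C2 * C0 / (1 + |s| + t) ^ 4 := by
    intro s t ht
    have hx : (0:ℝ) < 1 + |s| + t := by positivity
    rw [abs_mul]
    calc |pd1 (pd1 u) s t| * |u s t|
        ≤ C2 / (1 + |s| + t) ^ 4 * C0 := by
          gcongr
          · exact hb2 s t ht
          · exact hb0' s t ht
      _ = C2 * C0 / (1 + |s| + t) ^ 4 := by ring
  have hIA : Integrable
      (Function.uncurry (fun s t => Vpot θ s t * pd1 (pd1 (pd1 u)) s t * u s t))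
      (volume.prod (volume.restrict (Set.Ioi 0))) :=
    integrable_half_of_decay ((hcV.mul hc3).mul hcu) (mul_nonneg hC3 hC0) hbA
  have hIB : Integrable
      (Function.uncurry (fun s t => pd1 (pd1 u) s t * u s t))
      (volume.prod (volume.restrict (Set.Ioi 0))) :=
    integrable_half_of_decay (hc2.mul hcu) (mul_nonneg hC2 hC0) hbB
  calc intHalf (fun s t => Vpot θ s t * pd1 (pd1 (pd1 u)) s t * u s t)
      = ∫ t in Set.Ioi (0:ℝ), ∫ s : ℝ, Vpot θ s t * pd1 (pd1 (pd1 u)) s t * u s t := by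
        unfold intHalf
        exact integral_integral_swap hIA
    _ = ∫ t in Set.Ioi (0:ℝ), 3 / 2 * Real.sin θ * ∫ s : ℝ, pd1 (pd1 u) s t * u s t := by
        refine setIntegral_congr_fun measurableSet_Ioi (fun t ht => ?_)
        exact slice_identity θ hsm hsb t (le_of_lt ht)
    _ = 3 / 2 * Real.sin θ * ∫ t in Set.Ioi (0:ℝ), ∫ s : ℝ, pd1 (pd1 u) s t * u s t := by
        rw [MeasureTheory.integral_const_mul]
    _ = 3 / 2 * Real.sin θ * intHalf (fun s t => pd1 (pd1 u) s t * u s t) := by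
        congr 1
        unfold intHalf
        exact (integral_integral_swap hIB).symm
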